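/- Fix a real number N > 1 and L > 0. For every ε > 0 there exist w̄ > 0 and δ̄ > 0 such that for all D ≥ 3L, all D' ∈ (0, D], every probability CD(0,N) density h on [0,D'], and every interval set E ⊆ [0, L] with 0 < m_h(E) ≤ w̄ and Res_h^D(E) ≤ δ̄, one has h(x) ≥ (N/D^N)·x^{N−1}·(1 − ε) for every x ∈ [0, b(E)]. -/

import Mathlib

open MeasureTheory Set
open scoped Classical NNReal

noncomputable section


/-- A `CD(0,N)` density on `[0, D']`: nonnegative on `[0, D']`, positive on `(0, D')`,
and `h^{1/(N-1)}` is concave on `[0, D']`. -/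
def IsCDDensity (N D' : ℝ) (h : ℝ → ℝ) : Prop :=
  (∀ x ∈ Set.Icc (0:ℝ) D', 0 ≤ h x) ∧
  (∀ x ∈ Set.Ioo (0:ℝ) D', 0 < h x) ∧
  ConcaveOn ℝ (Set.Icc (0:ℝ) D') (fun x => h x ^ (1 / (N - 1)))

/-- A probability `CD(0,N)` density on `[0, D']`. -/
def IsProbCDDensity (N D' : ℝ) (h : ℝ → ℝ) : Prop :=
  IsCDDensity N D' h ∧ (∫ x in Set.Icc (0:ℝ) D', h x) = 1

/-- A decomposition of an "interval set" `E ⊆ [0, D']`: up to a Lebesgue-null set, `E` is an at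
most countable union of pairwise separated open intervals (degenerate intervals `a i = b i`
are allowed, so that finite families are covered); the summability field expresses that the
perimeter of `E` with respect to the density `h` is a (finite) real number. -/
structure IntervalDecomp (D' : ℝ) (h : ℝ → ℝ) (E : Set ℝ) where
  a : ℕ → ℝ
  b : ℕ → ℝ
  nonneg : ∀ i, 0 ≤ a i
  le : ∀ i, a i ≤ b i
  le_top : ∀ i, b i ≤ D'
  sep : ∀ i j, i ≠ j → b i ≤ a j ∨ b j ≤ a i
  aeEq : E =ᵐ[volume] ⋃ i, Set.Ioo (a i) (b i)
  summablePerim : Summable fun i =>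
    (if a i < b i ∧ a i ≠ 0 then h (a i) else 0) +
    (if a i < b i ∧ b i ≠ D' then h (b i) else 0)

/-- The weighted perimeter `P_h(E) = Σ_{i : a_i ≠ 0} h(a_i) + Σ_{i : b_i ≠ D'} h(b_i)`
of an interval set, computed from a decomposition. -/
def IntervalDecomp.perim {D' : ℝ} {h : ℝ → ℝ} {E : Set ℝ}
    (d : IntervalDecomp D' h E) : ℝ :=
  ∑' i, ((if d.a i < d.b i ∧ d.a i ≠ 0 then h (d.a i) else 0) +
         (if d.a i < d.b i ∧ d.b i ≠ D' then h (d.b i) else 0))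

/-- The essential supremum `b(E)` of a set `E ⊆ ℝ` with respect to Lebesgue measure. -/
def essSupSet (E : Set ℝ) : ℝ :=
  sInf {t : ℝ | volume (E ∩ Set.Ioi t) = 0}


namespace Prop57

/-- superadditivity of x^p for p ∈ [0,1] -/
lemma rpow_superadd {p x y : ℝ} (hp0 : 0 ≤ p) (hp1 : p ≤ 1) (hx : 0 ≤ x) (hy : 0 ≤ y) :
    (x + y) ^ p ≤ x ^ p + y ^ p := by
  have h := NNReal.rpow_add_le_add_rpow x.toNNReal y.toNNReal hp0 hp1
  have h' : (((x.toNNReal + y.toNNReal) ^ p : ℝ≥0) : ℝ) ≤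
      ((x.toNNReal ^ p + y.toNNReal ^ p : ℝ≥0) : ℝ) := by exact_mod_cast h
  rw [NNReal.coe_add, NNReal.coe_rpow, NNReal.coe_rpow, NNReal.coe_rpow] at h'
  rw [Real.coe_toNNReal _ hx, Real.coe_toNNReal _ hy] at h'
  rw [NNReal.coe_add, Real.coe_toNNReal _ hx, Real.coe_toNNReal _ hy] at h'
  exact h'



/-- ∫_{Ioo p q} (S(x-k))^(N-1) dx = S^(N-1)((q-k)^N - (p-k)^N)/N for k ≤ p ≤ q -/
lemma lin_rpow_integral {N : ℝ} (hN : 1 < N) {S k p q : ℝ} (hS : 0 < S)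
    (hkp : k ≤ p) (hpq : p ≤ q) :
    ∫ x in Ioo p q, (S * (x - k)) ^ (N - 1) =
      S ^ (N - 1) * ((q - k) ^ N - (p - k) ^ N) / N := by
  have h1 : ∫ x in Ioo p q, (S * (x - k)) ^ (N - 1) =
      ∫ x in p..q, (S * (x - k)) ^ (N - 1) := by
    rw [intervalIntegral.integral_of_le hpq, integral_Ioc_eq_integral_Ioo]
  rw [h1]
  have h2 : EqOn (fun x => (S * (x - k)) ^ (N - 1))
      (fun x => S ^ (N - 1) * (x - k) ^ (N - 1)) (uIcc p q) := by
    intro x hx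
    rw [uIcc_of_le hpq] at hx
    simp only
    rw [Real.mul_rpow hS.le (by linarith [hx.1] : 0 ≤ x - k)]
  rw [intervalIntegral.integral_congr h2]
  rw [intervalIntegral.integral_const_mul]
  have h3 : ∫ x in p..q, (x - k) ^ (N - 1) = ∫ x in (p-k)..(q-k), x ^ (N - 1) :=
    intervalIntegral.integral_comp_sub_right (fun u => u ^ (N - 1)) k
  rw [h3, integral_rpow (Or.inl (by linarith : (-1:ℝ) < N - 1))]
  rw [(by ring : N - 1 + 1 = N)]
  ring

/-- ∫_{Ioo m γ} (max (S(x-k)) 0)^(N-1) dx = S^(N-1)(γ-k)^N/N for m ≤ k ≤ γ -/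
lemma lin_rpow_integral_max {N : ℝ} (hN : 1 < N) {S k m γ : ℝ} (hS : 0 < S)
    (hmk : m ≤ k) (hkγ : k ≤ γ) :
    ∫ x in Ioo m γ, (max (S * (x - k)) 0) ^ (N - 1) =
      S ^ (N - 1) * (γ - k) ^ N / N := by
  have hcont : Continuous (fun x => (max (S * (x - k)) 0) ^ (N - 1)) := by
    apply Continuous.rpow_const
    · exact (continuous_const.mul (continuous_id.sub continuous_const)).max continuous_const
    · intro x; right; linarith
  have h1 : ∫ x in Ioo m γ, (max (S * (x - k)) 0) ^ (N - 1) =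
      ∫ x in m..γ, (max (S * (x - k)) 0) ^ (N - 1) := by
    rw [intervalIntegral.integral_of_le (hmk.trans hkγ), integral_Ioc_eq_integral_Ioo]
  rw [h1, ← intervalIntegral.integral_add_adjacent_intervals
    (hcont.intervalIntegrable m k) (hcont.intervalIntegrable k γ)]
  have hz : ∫ x in m..k, (max (S * (x - k)) 0) ^ (N - 1) = 0 := by
    have : EqOn (fun x => (max (S * (x - k)) 0) ^ (N - 1)) (fun _ => (0:ℝ)) (uIcc m k) := by
      intro x hx
      rw [uIcc_of_le hmk] at hx
      simp only
      rw [max_eq_right (by nlinarith [hx.2] : S * (x - k) ≤ 0)]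
      exact Real.zero_rpow (by linarith)
    rw [intervalIntegral.integral_congr this]
    simp
  have hmain : ∫ x in k..γ, (max (S * (x - k)) 0) ^ (N - 1) =
      ∫ x in k..γ, (S * (x - k)) ^ (N - 1) := by
    apply intervalIntegral.integral_congr
    intro x hx
    rw [uIcc_of_le hkγ] at hx
    simp only
    rw [max_eq_left (by nlinarith [hx.1] : 0 ≤ S * (x - k))]
  have h2 : ∫ x in k..γ, (S * (x - k)) ^ (N - 1) =
      S ^ (N - 1) * ((γ - k) ^ N - (k - k) ^ N) / N := by
    rw [intervalIntegral.integral_of_le hkγ, integral_Ioc_eq_integral_Ioo]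
    exact lin_rpow_integral hN hS (le_refl k) hkγ
  rw [hz, hmain, h2, zero_add, sub_self]
  rw [Real.zero_rpow (by linarith : N ≠ 0)]
  ring


section Density

variable {N D' : ℝ} {h : ℝ → ℝ}

/-- the profile function -/
def g (N : ℝ) (h : ℝ → ℝ) : ℝ → ℝ := fun x => h x ^ (1 / (N - 1))

variable (hN : 1 < N)
include hN

lemma g_nonneg (hnn : ∀ x ∈ Icc (0:ℝ) D', 0 ≤ h x) {x : ℝ} (hx : x ∈ Icc (0:ℝ) D') :
    0 ≤ g N h x := Real.rpow_nonneg (hnn x hx) _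

lemma h_eq_g (hnn : ∀ x ∈ Icc (0:ℝ) D', 0 ≤ h x) {x : ℝ} (hx : x ∈ Icc (0:ℝ) D') :
    h x = g N h x ^ (N - 1) := by
  have hne : N - 1 ≠ 0 := by linarith
  rw [g, ← Real.rpow_mul (hnn x hx), one_div, inv_mul_cancel₀ hne, Real.rpow_one]

/-- from `g y ≤ B` conclude `h y ≤ B^(N-1)` -/
lemma h_le_of_g_le (hnn : ∀ x ∈ Icc (0:ℝ) D', 0 ≤ h x) {x B : ℝ} (hx : x ∈ Icc (0:ℝ) D')
    (hB : g N h x ≤ B) : h x ≤ B ^ (N - 1) := by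
  rw [h_eq_g hN hnn hx]
  exact Real.rpow_le_rpow (g_nonneg hN hnn hx) hB (by linarith)

variable (hconc : ConcaveOn ℝ (Icc (0:ℝ) D') (g N h))
include hconc

/-- F1: for 0 ≤ x ≤ y ≤ D', 0 < y : (x/y)^(N-1) h y ≤ h x -/
lemma F1 (hnn : ∀ x ∈ Icc (0:ℝ) D', 0 ≤ h x) {x y : ℝ} (hx : 0 ≤ x) (hxy : x ≤ y)
    (hy : 0 < y) (hyD : y ≤ D') : (x / y) ^ (N - 1) * h y ≤ h x := by
  have h0D : (0:ℝ) ≤ D' := le_trans hy.le hyD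
  have hxI : x ∈ Icc (0:ℝ) D' := ⟨hx, hxy.trans hyD⟩
  have hyI : y ∈ Icc (0:ℝ) D' := ⟨hy.le, hyD⟩
  have h0I : (0:ℝ) ∈ Icc (0:ℝ) D' := ⟨le_refl _, h0D⟩
  have hb0 : 0 ≤ x / y := div_nonneg hx hy.le
  have hb1 : 0 ≤ 1 - x / y := by
    have : x / y ≤ 1 := (div_le_one hy).2 hxy
    linarith
  have hcomb := hconc.2 h0I hyI hb1 hb0 (by ring)
  have hpt : (1 - x / y) • (0:ℝ) + (x / y) • y = x := by
    rw [smul_zero, zero_add, smul_eq_mul, div_mul_cancel₀ x hy.ne']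
  rw [hpt] at hcomb
  have hg0 : 0 ≤ (1 - x / y) • g N h 0 :=
    smul_nonneg hb1 (g_nonneg hN hnn h0I)
  have hgx : (x / y) * g N h y ≤ g N h x := by
    have := hcomb
    simp only [smul_eq_mul] at this hg0 ⊢
    linarith
  -- now raise to power N-1
  have hgy : 0 ≤ g N h y := g_nonneg hN hnn hyI
  have := Real.rpow_le_rpow (by positivity) hgx (by linarith : (0:ℝ) ≤ N - 1)
  rw [Real.mul_rpow hb0 hgy] at this
  rw [h_eq_g hN hnn hxI, h_eq_g hN hnn hyI]
  exact this

/-- F2 wedge: for 0 ≤ u ≤ a < D' : h u ≤ ((D'-u)/(D'-a))^(N-1) * h a -/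
lemma F2 (hnn : ∀ x ∈ Icc (0:ℝ) D', 0 ≤ h x) {u a : ℝ} (hu : 0 ≤ u) (hua : u ≤ a)
    (haD : a < D') : h u ≤ ((D' - u) / (D' - a)) ^ (N - 1) * h a := by
  have h0D : (0:ℝ) ≤ D' := le_trans hu (le_trans hua haD.le)
  have huI : u ∈ Icc (0:ℝ) D' := ⟨hu, le_trans hua haD.le⟩
  have haI : a ∈ Icc (0:ℝ) D' := ⟨le_trans hu hua, haD.le⟩
  have hDI : D' ∈ Icc (0:ℝ) D' := ⟨h0D, le_refl _⟩
  set lam : ℝ := (D' - a) / (D' - u) with hlam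
  have hDu : 0 < D' - u := by linarith
  have hDa : 0 < D' - a := by linarith
  have hl0 : 0 < lam := div_pos hDa hDu
  have hl1 : lam ≤ 1 := by
    rw [hlam, div_le_one hDu]; linarith
  have hcomb := hconc.2 huI hDI hl0.le (by linarith : 0 ≤ 1 - lam) (by ring)
  have hpt : lam • u + (1 - lam) • D' = a := by
    simp only [smul_eq_mul, hlam]
    field_simp
    ring
  rw [hpt] at hcomb
  have hg1 : 0 ≤ (1 - lam) • g N h D' := smul_nonneg (by linarith) (g_nonneg hN hnn hDI)
  have hga : lam * g N h u ≤ g N h a := by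
    simp only [smul_eq_mul] at hcomb hg1 ⊢; linarith
  have hgu : g N h u ≤ g N h a / lam := by
    rw [le_div_iff₀ hl0]; linarith [hga, mul_comm lam (g N h u)]
  have := h_le_of_g_le hN hnn huI hgu
  rw [Real.div_rpow (g_nonneg hN hnn haI) hl0.le] at this
  rw [h_eq_g hN hnn haI]
  calc h u ≤ g N h a ^ (N-1) / lam ^ (N-1) := this
    _ = (1/lam) ^ (N-1) * g N h a ^ (N-1) := by
        rw [Real.div_rpow (by norm_num) hl0.le, Real.one_rpow]; ring
    _ = ((D' - u) / (D' - a)) ^ (N - 1) * g N h a ^ (N-1) := by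
        rw [hlam, one_div_div]

end Density

set_option maxHeartbeats 2000000 in
/-- Core Lévy-Gromov-type lemma: if at least mass 49/100 lies to the right of γ
and the interval (α,γ) has mass v ≤ (9/400)^N, then h γ ≥ (9/20) N v^(1-1/N) / D'. -/
lemma coreLG {N D' : ℝ} (hN : 1 < N) (hD' : 0 < D') {h : ℝ → ℝ}
    (hnn : ∀ x ∈ Icc (0:ℝ) D', 0 ≤ h x)
    (hconc : ConcaveOn ℝ (Icc (0:ℝ) D') (g N h))
    (hint : IntegrableOn h (Icc (0:ℝ) D') volume)
    {α γ : ℝ} (hα : 0 ≤ α) (hαγ : α ≤ γ) (hγ : γ < D')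
    (hR : (49:ℝ)/100 ≤ ∫ x in Ioo γ D', h x)
    (hv : (∫ x in Ioo α γ, h x) ≤ (9/400) ^ N) :
    (9/20) * N * (∫ x in Ioo α γ, h x) ^ (1 - 1/N) / D' ≤ h γ := by
  have hN0 : (0:ℝ) < N := by linarith
  have hN1 : N - 1 ≠ 0 := by linarith
  have hγI : γ ∈ Icc (0:ℝ) D' := ⟨hα.trans hαγ, hγ.le⟩
  set v : ℝ := ∫ x in Ioo α γ, h x with hvdef
  have hv0 : 0 ≤ v := setIntegral_nonneg measurableSet_Ioo
    (fun x hx => hnn x ⟨hα.trans hx.1.le, hx.2.le.trans hγ.le⟩)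
  set G : ℝ := g N h γ with hGdef
  have hG0 : 0 ≤ G := g_nonneg hN hnn hγI
  have hhγ : h γ = G ^ (N - 1) := h_eq_g hN hnn hγI
  -- key constants
  set base : ℝ := (9/20) * N / D' with hbase
  have hbase0 : 0 < base := by positivity
  set Y : ℝ := base ^ (1/(N-1)) with hY
  have hY0 : 0 < Y := Real.rpow_pos_of_pos hbase0 _
  have idY : Y ^ (N - 1) = base := by
    rw [hY, ← Real.rpow_mul hbase0.le, one_div, inv_mul_cancel₀ hN1, Real.rpow_one]
  set T : ℝ := (9/20) * Y with hT
  have hT0 : 0 < T := by positivity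
  have idT : T ^ (N - 1) = (9/20) ^ (N-1) * base := by
    rw [hT, Real.mul_rpow (by norm_num) hY0.le, idY]
  set S₁ : ℝ := T / D' with hS₁
  have hS₁0 : 0 < S₁ := by positivity
  -- final algebra step, given v ≤ G^N/(N*S₁)
  have final : v ≤ G ^ N / (N * S₁) → base * v ^ (1 - 1/N) ≤ G ^ (N-1) := by
    intro hvb
    have hNS : N * S₁ = base ^ (N/(N-1)) := by
      have h1 : N * S₁ = base * Y := by
        rw [hS₁, hT, hbase]; field_simp
      have e : N/(N-1) = 1 + 1/(N-1) := by field_simp; ring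
      rw [h1, e, Real.rpow_add hbase0, Real.rpow_one, hY]
    have hNS0 : 0 < N * S₁ := by positivity
    have hexp : 1 - 1/N = (N-1)/N := by field_simp
    have hvpow : v ^ (1 - 1/N) ≤ (G ^ N / (N * S₁)) ^ ((N-1)/N) := by
      rw [← hexp]
      exact Real.rpow_le_rpow hv0 hvb (by
        rw [hexp]; apply div_nonneg <;> linarith)
    have hsplit : (G ^ N / (N * S₁)) ^ ((N-1)/N) = G ^ (N-1) / base := by
      rw [Real.div_rpow (Real.rpow_nonneg hG0 _) hNS0.le]
      congr 1
      · rw [← Real.rpow_mul hG0]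
        congr 1
        field_simp
      · rw [hNS, ← Real.rpow_mul hbase0.le]
        rw [(by field_simp : N/(N-1) * ((N-1)/N) = 1), Real.rpow_one]
    calc base * v ^ (1 - 1/N) ≤ base * (G ^ N / (N * S₁)) ^ ((N-1)/N) := by
          exact mul_le_mul_of_nonneg_left hvpow hbase0.le
      _ = base * (G ^ (N-1) / base) := by rw [hsplit]
      _ = G ^ (N-1) := by field_simp
  have hgoal : base * v ^ (1 - 1/N) = (9/20) * N * v ^ (1 - 1/N) / D' := by
    rw [hbase]; ring
  -- branch on existence of a steep chord to the right of γ
  by_cases hz : ∃ z ∈ Ioo γ D', S₁ * (z - γ) ≤ g N h z - G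
  · -- steep chord: mass in (α,γ) is controlled
    obtain ⟨z, hzI, hzS⟩ := hz
    have hzIcc : z ∈ Icc (0:ℝ) D' := ⟨(hγI.1.trans hzI.1.le), hzI.2.le⟩
    set k : ℝ := γ - G / S₁ with hk
    have hkγ : k ≤ γ := by
      rw [hk]; have : 0 ≤ G / S₁ := by positivity
      linarith
    set m : ℝ := min α k with hm
    -- pointwise bound on (α,γ)
    have hpt : ∀ y ∈ Ioo α γ, h y ≤ (max (S₁ * (y - k)) 0) ^ (N - 1) := by
      intro y hy
      have hyIcc : y ∈ Icc (0:ℝ) D' := ⟨hα.trans hy.1.le, (hy.2.le.trans hγ.le)⟩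
      have hslope := hconc.slope_anti_adjacent hyIcc hzIcc hy.2 hzI.1
      -- (g z - g γ)/(z - γ) ≤ (g γ - g y)/(γ - y)
      have hzg : 0 < z - γ := by linarith [hzI.1]
      have hyg : 0 < γ - y := by linarith [hy.2]
      have hS1le : S₁ ≤ (g N h z - G) / (z - γ) := by
        rw [le_div_iff₀ hzg]; linarith [hzS]
      have h2 : S₁ ≤ (G - g N h y) / (γ - y) := by
        calc S₁ ≤ (g N h z - G) / (z - γ) := hS1le
          _ ≤ (G - g N h y) / (γ - y) := hslope
      have h3 : g N h y ≤ G - (γ - y) * S₁ := by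
        rw [le_div_iff₀ hyg] at h2
        nlinarith
      have h4 : G - (γ - y) * S₁ = S₁ * (y - k) := by
        rw [hk]; field_simp; ring
      have h5 : g N h y ≤ max (S₁ * (y - k)) 0 := le_max_of_le_left (h4 ▸ h3)
      exact h_le_of_g_le hN hnn hyIcc h5
    have hcont : Continuous (fun x => (max (S₁ * (x - k)) 0) ^ (N - 1)) := by
      apply Continuous.rpow_const
      · exact (continuous_const.mul (continuous_id.sub continuous_const)).max continuous_const
      · intro x; right; linarith
    have hvle : v ≤ ∫ x in Ioo m γ, (max (S₁ * (x - k)) 0) ^ (N - 1) := by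
      have step1 : v ≤ ∫ x in Ioo α γ, (max (S₁ * (x - k)) 0) ^ (N - 1) := by
        apply setIntegral_mono_on
        · exact hint.mono_set (fun x hx => ⟨hα.trans hx.1.le, hx.2.le.trans hγ.le⟩)
        · exact (hcont.integrableOn_Icc.mono_set Ioo_subset_Icc_self)
        · exact measurableSet_Ioo
        · exact hpt
      refine step1.trans (setIntegral_mono_set (hcont.integrableOn_Icc.mono_set Ioo_subset_Icc_self) ?_ ?_)
      · filter_upwards with x
        positivity
      · exact HasSubset.Subset.eventuallyLE (Ioo_subset_Ioo (min_le_left _ _) (le_refl _))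
    rw [lin_rpow_integral_max hN hS₁0 (min_le_right _ _) hkγ] at hvle
    have hγk : γ - k = G / S₁ := by rw [hk]; ring
    have hvb : v ≤ G ^ N / (N * S₁) := by
      rw [hγk] at hvle
      have : S₁ ^ (N-1) * (G / S₁) ^ N / N = G ^ N / (N * S₁) := by
        rw [Real.div_rpow hG0 hS₁0.le]
        rw [(by ring : N - 1 = N + (-1)), Real.rpow_add hS₁0, Real.rpow_neg_one]
        field_simp
      rw [this] at hvle
      exact hvle
    rw [hhγ, ← hgoal]
    exact final hvb
  · -- no steep chord: mass on the right is controlled, forcing G large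
    push_neg at hz
    set k : ℝ := γ - G / S₁ with hk
    have hkγ : k ≤ γ := by
      rw [hk]; have : 0 ≤ G / S₁ := by positivity
      linarith
    have hpt : ∀ z ∈ Ioo γ D', h z ≤ (S₁ * (z - k)) ^ (N - 1) := by
      intro z hzI
      have hzIcc : z ∈ Icc (0:ℝ) D' := ⟨hγI.1.trans hzI.1.le, hzI.2.le⟩
      have h1 := hz z hzI
      have h2 : g N h z ≤ S₁ * (z - k) := by
        have h3 : S₁ * (z - k) = G + S₁ * (z - γ) := by
          rw [hk]; field_simp; ring
        rw [h3]; linarith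
      exact h_le_of_g_le hN hnn hzIcc h2
    have hcont2 : Continuous (fun x : ℝ => (S₁ * (x - k)) ^ (N - 1)) := by
      apply Continuous.rpow_const
      · exact continuous_const.mul (continuous_id.sub continuous_const)
      · intro x; right; linarith
    have hRle : (49:ℝ)/100 ≤ S₁ ^ (N-1) * ((D' - k) ^ N - (γ - k) ^ N) / N := by
      calc (49:ℝ)/100 ≤ ∫ x in Ioo γ D', h x := hR
        _ ≤ ∫ x in Ioo γ D', (S₁ * (x - k)) ^ (N - 1) := by
            apply setIntegral_mono_on
            · exact hint.mono_set (fun x hx => ⟨hγI.1.trans hx.1.le, hx.2.le⟩)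
            · exact (hcont2.integrableOn_Icc.mono_set Ioo_subset_Icc_self)
            · exact measurableSet_Ioo
            · exact hpt
        _ = S₁ ^ (N-1) * ((D' - k) ^ N - (γ - k) ^ N) / N :=
            lin_rpow_integral hN hS₁0 hkγ hγ.le
    have hγknn : 0 ≤ γ - k := by linarith
    have hDk : 0 ≤ D' - k := by linarith
    have hGS : S₁ * (γ - k) = G := by
      rw [hk]; field_simp; ring
    have hRle2 : (49:ℝ)/100 ≤ (T + G) ^ N / (N * S₁) := by
      have hS1N : (0:ℝ) ≤ S₁ ^ (N-1) := (Real.rpow_pos_of_pos hS₁0 _).le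
      have e1 : S₁ ^ (N-1) * ((D' - k) ^ N - (γ - k) ^ N) / N ≤
          S₁ ^ (N-1) * (D' - k) ^ N / N := by
        have h0 : (0:ℝ) ≤ (γ - k) ^ N := Real.rpow_nonneg hγknn N
        gcongr <;> first | exact hS1N | linarith
      have e2 : S₁ ^ (N-1) * (D' - k) ^ N / N = (S₁ * (D' - k)) ^ N / (N * S₁) := by
        have t1 : S₁ ^ (N - 1 + 1) = S₁ ^ (N-1) * S₁ := by
          rw [Real.rpow_add hS₁0, Real.rpow_one]
        have t2 : S₁ ^ N = S₁ ^ (N-1) * S₁ := by rw [← t1]; congr 1; ring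
        rw [Real.mul_rpow hS₁0.le hDk, t2]
        field_simp
      have e3 : S₁ * (D' - k) ≤ T + G := by
        have : S₁ * (D' - k) = S₁ * (D' - γ) + S₁ * (γ - k) := by ring
        rw [this, hGS]
        have hγ0 : 0 ≤ γ := hγI.1
        have : S₁ * (D' - γ) ≤ S₁ * D' :=
          mul_le_mul_of_nonneg_left (by linarith) hS₁0.le
        have hTD : S₁ * D' = T := by rw [hS₁]; field_simp
        linarith
      have e4 : (S₁ * (D' - k)) ^ N ≤ (T + G) ^ N :=
        Real.rpow_le_rpow (by positivity) e3 hN0.le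
      have hNS0 : (0:ℝ) < N * S₁ := by positivity
      calc (49:ℝ)/100 ≤ S₁ ^ (N-1) * ((D' - k) ^ N - (γ - k) ^ N) / N := hRle
        _ ≤ S₁ ^ (N-1) * (D' - k) ^ N / N := e1
        _ = (S₁ * (D' - k)) ^ N / (N * S₁) := e2
        _ ≤ (T + G) ^ N / (N * S₁) := by gcongr
    have hTNS : T ^ N / (N * S₁) = (9/20) ^ N := by
      have t1 : T ^ (N - 1 + 1) = T ^ (N-1) * T := by
        rw [Real.rpow_add hT0, Real.rpow_one]
      have t2 : T ^ N = T ^ (N-1) * T := by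
        rw [← t1]; congr 1; ring
      have t3 : (9/20 : ℝ) ^ (N - 1 + 1) = (9/20 : ℝ) ^ (N-1) * (9/20 : ℝ) := by
        rw [Real.rpow_add (by norm_num), Real.rpow_one]
      calc T ^ N / (N * S₁) = (T ^ (N-1) * T) / (N * (T / D')) := by rw [t2, hS₁]
        _ = T ^ (N-1) * D' / N := by
            field_simp
        _ = (9/20 : ℝ) ^ (N-1) * ((9/20) * N / D') * D' / N := by rw [idT, hbase]
        _ = (9/20 : ℝ) ^ (N-1) * (9/20 : ℝ) := by field_simp
        _ = (9/20 : ℝ) ^ (N - 1 + 1) := t3.symm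
        _ = (9/20 : ℝ) ^ N := by congr 1; ring
    by_cases hGT : G ≤ T / 20
    · -- contradiction
      exfalso
      have e5 : (T + G) ^ N ≤ ((21/20) * T) ^ N := by
        apply Real.rpow_le_rpow (by positivity) (by linarith) hN0.le
      have e6 : ((21/20) * T) ^ N / (N * S₁) = (21/20) ^ N * (9/20) ^ N := by
        rw [Real.mul_rpow (by norm_num) hT0.le]
        rw [mul_div_assoc, hTNS]
      have hNS0 : (0:ℝ) < N * S₁ := by positivity
      have e7 : (49:ℝ)/100 ≤ (21/20 : ℝ) ^ N * (9/20 : ℝ) ^ N := by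
        calc (49:ℝ)/100 ≤ (T + G) ^ N / (N * S₁) := hRle2
          _ ≤ ((21/20) * T) ^ N / (N * S₁) := by gcongr
          _ = (21/20 : ℝ) ^ N * (9/20 : ℝ) ^ N := e6
      have e8 : (21/20 : ℝ) ^ N * (9/20 : ℝ) ^ N = (189/400 : ℝ) ^ N := by
        rw [← Real.mul_rpow (by norm_num) (by norm_num)]
        norm_num
      have e9 : ((189:ℝ)/400) ^ N < (189:ℝ)/400 := by
        nth_rewrite 2 [(by rw [Real.rpow_one] : (189:ℝ)/400 = ((189:ℝ)/400) ^ (1:ℝ))]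
        exact Real.rpow_lt_rpow_of_exponent_gt (by norm_num) (by norm_num) hN
      rw [e8] at e7
      linarith
    · -- G is large: direct bound
      push_neg at hGT
      have e10 : (T/20) ^ (N-1) = (9/400) ^ (N-1) * base := by
        have : T / 20 = (9/400) * Y := by rw [hT]; ring
        rw [this, Real.mul_rpow (by norm_num) hY0.le, idY]
      have e11 : v ^ (1 - 1/N) ≤ (9/400 : ℝ) ^ (N-1) := by
        have h1 : v ^ (1 - 1/N) ≤ ((9/400 : ℝ) ^ N) ^ (1 - 1/N) :=
          Real.rpow_le_rpow hv0 hv (by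
            have : (0:ℝ) < 1 - 1/N := by
              rw [sub_pos, div_lt_one hN0]; linarith
            linarith)
        rwa [← Real.rpow_mul (by norm_num : (0:ℝ) ≤ 9/400),
          (by field_simp : N * (1 - 1/N) = N - 1)] at h1
      have e12 : (T/20) ^ (N-1) ≤ G ^ (N-1) :=
        Real.rpow_le_rpow (by positivity) hGT.le (by linarith)
      rw [hhγ, ← hgoal]
      calc base * v ^ (1 - 1/N) ≤ base * (9/400 : ℝ) ^ (N-1) :=
            mul_le_mul_of_nonneg_left e11 hbase0.le
        _ = (T/20) ^ (N-1) := by rw [e10]; ring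
        _ ≤ G ^ (N-1) := e12


/-- reflection preserves concavity on [0,D'] -/
lemma concaveOn_reflect {D' : ℝ} {f : ℝ → ℝ} (hf : ConcaveOn ℝ (Icc (0:ℝ) D') f) :
    ConcaveOn ℝ (Icc (0:ℝ) D') (fun x => f (D' - x)) := by
  refine ⟨convex_Icc _ _, ?_⟩
  intro x hx y hy a b ha hb hab
  have hx' : D' - x ∈ Icc (0:ℝ) D' := ⟨by linarith [hx.2], by linarith [hx.1]⟩
  have hy' : D' - y ∈ Icc (0:ℝ) D' := ⟨by linarith [hy.2], by linarith [hy.1]⟩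
  have := hf.2 hx' hy' ha hb hab
  have harg : a • (D' - x) + b • (D' - y) = D' - (a • x + b • y) := by
    simp only [smul_eq_mul]
    linear_combination D' * hab
  rw [harg] at this
  simpa using this

/-- transfer of set integrals under reflection -/
lemma integral_reflect (h : ℝ → ℝ) {D' p q : ℝ} (hpq : p ≤ q) :
    ∫ x in Ioo p q, h (D' - x) = ∫ x in Ioo (D' - q) (D' - p), h x := by
  rw [← integral_Ioc_eq_integral_Ioo, ← intervalIntegral.integral_of_le hpq,
    intervalIntegral.integral_comp_sub_left h D',
    intervalIntegral.integral_of_le (by linarith), integral_Ioc_eq_integral_Ioo]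

set_option maxHeartbeats 1000000 in
/-- Per-interval isoperimetric-type bound. -/
lemma perimLG {N D' : ℝ} (hN : 1 < N) (hD' : 0 < D') {h : ℝ → ℝ}
    (hnn : ∀ x ∈ Icc (0:ℝ) D', 0 ≤ h x)
    (hconc : ConcaveOn ℝ (Icc (0:ℝ) D') (g N h))
    (hint : IntegrableOn h (Icc (0:ℝ) D') volume)
    (hmass : (∫ x in Icc (0:ℝ) D', h x) = 1)
    {α γ : ℝ} (h0α : 0 ≤ α) (hαγ : α < γ) (hγD : γ ≤ D')
    (hv1 : (∫ x in Ioo α γ, h x) ≤ (9/400) ^ N)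
    (hv2 : (∫ x in Ioo α γ, h x) ≤ 1/50) :
    (9/20) * N * (∫ x in Ioo α γ, h x) ^ (1 - 1/N) / D' ≤
      (if α ≠ 0 then h α else 0) + (if γ ≠ D' then h γ else 0) := by
  have h0D : (0:ℝ) ≤ D' := hD'.le
  have hαI : α ∈ Icc (0:ℝ) D' := ⟨h0α, hαγ.le.trans hγD⟩
  have hγI : γ ∈ Icc (0:ℝ) D' := ⟨h0α.trans hαγ.le, hγD⟩
  set v : ℝ := ∫ x in Ioo α γ, h x with hvdef
  set Λ : ℝ := ∫ x in Ioo 0 α, h x with hΛdef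
  set R : ℝ := ∫ x in Ioo γ D', h x with hRdef
  have hR0 : 0 ≤ R := setIntegral_nonneg measurableSet_Ioo
    (fun x hx => hnn x ⟨hγI.1.trans hx.1.le, hx.2.le⟩)
  have hv0 : 0 ≤ v := setIntegral_nonneg measurableSet_Ioo
    (fun x hx => hnn x ⟨h0α.trans hx.1.le, hx.2.le.trans hγD⟩)
  -- mass splitting
  have hsplit : Λ + v + R = 1 := by
    have d1 : Disjoint (Ico (0:ℝ) α) (Icc α D') := (by
      rw [Set.disjoint_left]
      intro x hx hx'
      exact absurd hx'.1 (not_le.mpr hx.2))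
    have u1 : Ico (0:ℝ) α ∪ Icc α D' = Icc 0 D' :=
      Ico_union_Icc_eq_Icc h0α (hαγ.le.trans hγD)
    have d2 : Disjoint (Icc α γ) (Ioc γ D') := by
      rw [Set.disjoint_left]
      intro x hx hx'
      exact absurd hx.2 (not_le.mpr hx'.1)
    have u2 : Icc α γ ∪ Ioc γ D' = Icc α D' := Icc_union_Ioc_eq_Icc hαγ.le hγD
    have i1 : IntegrableOn h (Ico (0:ℝ) α) volume :=
      hint.mono_set (fun x hx => ⟨hx.1, hx.2.le.trans (hαγ.le.trans hγD)⟩)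
    have i2 : IntegrableOn h (Icc α γ) volume :=
      hint.mono_set (fun x hx => ⟨h0α.trans hx.1, hx.2.trans hγD⟩)
    have i3 : IntegrableOn h (Ioc γ D') volume :=
      hint.mono_set (fun x hx => ⟨hγI.1.trans hx.1.le, hx.2⟩)
    have e1 : ∫ x in Icc α D', h x = (∫ x in Icc α γ, h x) + ∫ x in Ioc γ D', h x := by
      rw [← u2, setIntegral_union d2 measurableSet_Ioc i2 i3]
    have e2 : (1:ℝ) = (∫ x in Ico 0 α, h x) + ∫ x in Icc α D', h x := by
      rw [← hmass, ← u1, setIntegral_union d1 measurableSet_Icc i1 (i2.union i3 |>.mono_set (by rw [u2]))]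
    rw [e1] at e2
    rw [integral_Ico_eq_integral_Ioo, integral_Icc_eq_integral_Ioo,
      integral_Ioc_eq_integral_Ioo] at e2
    rw [hΛdef, hvdef, hRdef]
    linarith
  rcases le_or_gt (49/100 : ℝ) R with hcase | hcase
  · -- right case : use h γ
    have hγD' : γ < D' := by
      rcases lt_or_eq_of_le hγD with hh | hh
      · exact hh
      · exfalso
        have : Ioo γ D' = ∅ := by rw [hh]; exact Ioo_self D'
        rw [hRdef, this] at hcase
        simp at hcase
        linarith
    have hcore := coreLG hN hD' hnn hconc hint h0α hαγ.le hγD' hcase hv1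
    have hα0 : 0 ≤ (if α ≠ 0 then h α else 0) := by
      split
      · exact hnn α hαI
      · exact le_refl 0
    rw [if_pos (ne_of_lt hγD')]
    linarith
  · -- left case : use h α via reflection
    have hΛ : (49:ℝ)/100 ≤ Λ := by linarith
    have hα0 : 0 < α := by
      rcases lt_or_eq_of_le h0α with hh | hh
      · exact hh
      · exfalso
        have : Ioo (0:ℝ) α = ∅ := by rw [← hh]; exact Ioo_self 0
        rw [hΛdef, this] at hΛ
        simp at hΛ
        linarith
    set h' : ℝ → ℝ := fun x => h (D' - x) with hh'def
    have hnn' : ∀ x ∈ Icc (0:ℝ) D', 0 ≤ h' x := fun x hx =>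
      hnn _ ⟨by linarith [hx.2], by linarith [hx.1]⟩
    have hconc' : ConcaveOn ℝ (Icc (0:ℝ) D') (g N h') := concaveOn_reflect hconc
    have hint' : IntegrableOn h' (Icc (0:ℝ) D') volume := by
      have h1 := (intervalIntegrable_iff_integrableOn_Icc_of_le h0D).mpr hint
      have h2 := h1.comp_sub_left D'
      simp only [sub_zero, sub_self] at h2
      exact (intervalIntegrable_iff_integrableOn_Icc_of_le h0D).mp h2.symm
    have hR' : (49:ℝ)/100 ≤ ∫ x in Ioo (D' - α) D', h' x := by
      have e : ∫ x in Ioo (D' - α) D', h' x = Λ := by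
        rw [hh'def, integral_reflect h (by linarith : D' - α ≤ D'), hΛdef]
        norm_num
      rw [e]; exact hΛ
    have hv' : (∫ x in Ioo (D' - γ) (D' - α), h' x) = v := by
      rw [hh'def, integral_reflect h (by linarith : D' - γ ≤ D' - α)]
      norm_num
      exact hvdef.symm
    have hcore := coreLG hN hD' hnn' hconc' hint'
      (by linarith : (0:ℝ) ≤ D' - γ) (by linarith : D' - γ ≤ D' - α)
      (by linarith : D' - α < D') hR' (by rw [hv']; exact hv1)
    rw [hv'] at hcore
    have hα' : h' (D' - α) = h α := by rw [hh'def]; norm_num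
    rw [hα'] at hcore
    have hγ0 : 0 ≤ (if γ ≠ D' then h γ else 0) := by
      split
      · exact hnn γ hγI
      · exact le_refl 0
    rw [if_pos (ne_of_gt hα0)]
    linarith

lemma finset_rpow_superadd {p : ℝ} (hp0 : 0 < p) (hp1 : p ≤ 1) (v : ℕ → ℝ)
    (hv : ∀ i, 0 ≤ v i) (s : Finset ℕ) :
    (∑ i ∈ s, v i) ^ p ≤ ∑ i ∈ s, (v i) ^ p := by
  classical
  induction s using Finset.cons_induction with
  | empty => simp [Real.zero_rpow hp0.ne']
  | cons a s ha ih =>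
      rw [Finset.sum_cons, Finset.sum_cons]
      calc (v a + ∑ i ∈ s, v i) ^ p ≤ (v a) ^ p + (∑ i ∈ s, v i) ^ p :=
            rpow_superadd hp0.le hp1 (hv a) (Finset.sum_nonneg fun i _ => hv i)
        _ ≤ (v a) ^ p + ∑ i ∈ s, (v i) ^ p := by linarith [ih]

/-- In the "short domain" situation, the total perimeter dominates the model value with
constant 9/20 relative to D'. -/
lemma perim_lower_bound {N D' : ℝ} (hN : 1 < N) (hD' : 0 < D') {h : ℝ → ℝ} {E : Set ℝ}
    (hnn : ∀ x ∈ Icc (0:ℝ) D', 0 ≤ h x)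
    (hconc : ConcaveOn ℝ (Icc (0:ℝ) D') (g N h))
    (hint : IntegrableOn h (Icc (0:ℝ) D') volume)
    (hmass : (∫ x in Icc (0:ℝ) D', h x) = 1)
    (d : IntervalDecomp D' h E)
    (hsmall : ∀ i, (∫ x in Ioo (d.a i) (d.b i), h x) ≤ (9/400) ^ N)
    (hsmall2 : ∀ i, (∫ x in Ioo (d.a i) (d.b i), h x) ≤ 1/50) :
    (9/20) * N * (∫ x in ⋃ i, Ioo (d.a i) (d.b i), h x) ^ (1 - 1/N) / D' ≤ d.perim := by
  have hN0 : (0:ℝ) < N := by linarith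
  have hκ : (0:ℝ) < 1 - 1/N := by
    rw [sub_pos, div_lt_one hN0]; linarith
  have hκ1 : 1 - 1/N ≤ 1 := by
    have : (0:ℝ) < 1/N := by positivity
    linarith
  set v : ℕ → ℝ := fun i => ∫ x in Ioo (d.a i) (d.b i), h x with hvdef
  have hUsub : (⋃ i, Ioo (d.a i) (d.b i)) ⊆ Icc (0:ℝ) D' := by
    refine iUnion_subset fun i x hx => ⟨(d.nonneg i).trans hx.1.le, hx.2.le.trans (d.le_top i)⟩
  have hintU : IntegrableOn h (⋃ i, Ioo (d.a i) (d.b i)) volume := hint.mono_set hUsub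
  have hdisj : Pairwise (Function.onFun Disjoint fun i => Ioo (d.a i) (d.b i)) := by
    intro i j hij
    have : Disjoint (Ioo (d.a i) (d.b i)) (Ioo (d.a j) (d.b j)) := by
      rcases d.sep i j hij with hc | hc
      · rw [Set.disjoint_left]
        intro x hx hx'
        have : x < x := hx.2.trans_le (hc.trans hx'.1.le)
        exact absurd this (lt_irrefl x)
      · rw [Set.disjoint_left]
        intro x hx hx'
        have : x < x := hx'.2.trans_le (hc.trans hx.1.le)
        exact absurd this (lt_irrefl x)
    exact this
  have hs : HasSum v (∫ x in ⋃ i, Ioo (d.a i) (d.b i), h x) :=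
    hasSum_integral_iUnion (fun i => measurableSet_Ioo) hdisj hintU
  have hv0 : ∀ i, 0 ≤ v i := fun i => setIntegral_nonneg measurableSet_Ioo
    (fun x hx => hnn x ⟨(d.nonneg i).trans hx.1.le, hx.2.le.trans (d.le_top i)⟩)
  set q : ℕ → ℝ := fun i =>
    (if d.a i < d.b i ∧ d.a i ≠ 0 then h (d.a i) else 0) +
    (if d.a i < d.b i ∧ d.b i ≠ D' then h (d.b i) else 0) with hqdef
  have hq0 : ∀ i, 0 ≤ q i := by
    intro i
    have h1 : 0 ≤ (if d.a i < d.b i ∧ d.a i ≠ 0 then h (d.a i) else 0) := by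
      split
      · exact hnn _ ⟨d.nonneg i, (d.le i).trans (d.le_top i)⟩
      · exact le_refl 0
    have h2 : 0 ≤ (if d.a i < d.b i ∧ d.b i ≠ D' then h (d.b i) else 0) := by
      split
      · exact hnn _ ⟨(d.nonneg i).trans (d.le i), d.le_top i⟩
      · exact le_refl 0
    exact add_nonneg h1 h2
  have hkey : ∀ i, (9/20) * N * (v i) ^ (1 - 1/N) / D' ≤ q i := by
    intro i
    by_cases hab : d.a i < d.b i
    · have := perimLG hN hD' hnn hconc hint hmass (d.nonneg i) hab (d.le_top i)
        (hsmall i) (hsmall2 i)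
      calc (9/20) * N * (v i) ^ (1 - 1/N) / D' ≤
            (if d.a i ≠ 0 then h (d.a i) else 0) + (if d.b i ≠ D' then h (d.b i) else 0) := this
        _ = q i := by
            rw [hqdef]
            simp only [hab, true_and]
    · have hvi : v i = 0 := by
        rw [hvdef]
        simp only
        rw [Ioo_eq_empty hab]
        simp
      rw [hvi, Real.zero_rpow hκ.ne']
      simp only [mul_zero, zero_div]
      exact hq0 i
  -- finite stage bound
  have hfin : ∀ s : Finset ℕ, (∑ i ∈ s, v i) ^ (1 - 1/N) ≤ d.perim * D' / ((9/20) * N) := by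
    intro s
    have h1 : (∑ i ∈ s, v i) ^ (1 - 1/N) ≤ ∑ i ∈ s, (v i) ^ (1 - 1/N) :=
      finset_rpow_superadd hκ hκ1 v hv0 s
    have h2 : ∀ i, (v i) ^ (1 - 1/N) ≤ q i * D' / ((9/20) * N) := by
      intro i
      have := hkey i
      rw [div_le_iff₀ hD'] at this
      rw [le_div_iff₀ (by positivity : (0:ℝ) < (9/20) * N)]
      linarith
    have h3 : ∑ i ∈ s, (v i) ^ (1 - 1/N) ≤ ∑ i ∈ s, q i * D' / ((9/20) * N) :=
      Finset.sum_le_sum (fun i _ => h2 i)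
    have h4 : ∑ i ∈ s, q i ≤ d.perim := Summable.sum_le_tsum s (fun i _ => hq0 i) d.summablePerim
    calc (∑ i ∈ s, v i) ^ (1 - 1/N) ≤ ∑ i ∈ s, (v i) ^ (1 - 1/N) := h1
      _ ≤ ∑ i ∈ s, q i * D' / ((9/20) * N) := h3
      _ = (∑ i ∈ s, q i) * D' / ((9/20) * N) := by
          rw [← Finset.sum_div, ← Finset.sum_mul]
      _ ≤ d.perim * D' / ((9/20) * N) := by gcongr
  -- pass to the limit
  have htend : Filter.Tendsto (fun n => (∑ i ∈ Finset.range n, v i) ^ (1 - 1/N))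
      Filter.atTop (nhds ((∫ x in ⋃ i, Ioo (d.a i) (d.b i), h x) ^ (1 - 1/N))) := by
    exact ((Real.continuousAt_rpow_const _ _ (Or.inr hκ.le)).tendsto).comp
      hs.tendsto_sum_nat
  have hlim : (∫ x in ⋃ i, Ioo (d.a i) (d.b i), h x) ^ (1 - 1/N) ≤
      d.perim * D' / ((9/20) * N) :=
    le_of_tendsto htend (Filter.Eventually.of_forall (fun n => hfin _))
  have h5 : (∫ x in ⋃ i, Ioo (d.a i) (d.b i), h x) ^ (1 - 1/N) * ((9/20) * N) ≤
      d.perim * D' := (le_div_iff₀ (by positivity : (0:ℝ) < (9/20) * N)).mp hlim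
  rw [div_le_iff₀ hD']
  calc (9/20) * N * (∫ x in ⋃ i, Ioo (d.a i) (d.b i), h x) ^ (1 - 1/N)
      = (∫ x in ⋃ i, Ioo (d.a i) (d.b i), h x) ^ (1 - 1/N) * ((9/20) * N) := by ring
    _ ≤ d.perim * D' := h5

end Prop57

open Prop57 in
set_option maxHeartbeats 4000000 in
/-- Proposition 5.7 (almost rigidity of the density, lower bound): for small `m_h(E)` and
small residual, `h(x) ≥ (N/D^N) x^{N-1} (1 - ε)` uniformly for `x ∈ [0, b(E)]`. -/
theorem density_lower_bound (N L : ℝ) (hN : 1 < N) (hL : 0 < L) :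
    ∀ ε : ℝ, 0 < ε → ∃ wbar : ℝ, 0 < wbar ∧ ∃ δbar : ℝ, 0 < δbar ∧
      ∀ D D' : ℝ, 3 * L ≤ D → D' ∈ Set.Ioc (0:ℝ) D →
      ∀ h : ℝ → ℝ, IsProbCDDensity N D' h →
      ∀ E : Set ℝ, E ⊆ Set.Icc 0 L →
      ∀ d : IntervalDecomp D' h E,
        0 < (∫ x in E, h x) → (∫ x in E, h x) ≤ wbar →
        D * d.perim / (N * (∫ x in E, h x) ^ (1 - 1 / N)) - 1 ≤ δbar →
        ∀ x ∈ Set.Icc (0:ℝ) (essSupSet E),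
          (N / D ^ N) * x ^ (N - 1) * (1 - ε) ≤ h x := by
  intro ε hε
  have hN0 : (0:ℝ) < N := by linarith
  have hN1 : N - 1 ≠ 0 := by linarith
  have hκ0 : (0:ℝ) < 1 - 1/N := by rw [sub_pos, div_lt_one hN0]; linarith
  have hκe : 1 - 1/N = (N-1)/N := by field_simp
  set εm : ℝ := min ε (1/2) with hεmdef
  have hεm0 : 0 < εm := lt_min hε (by norm_num)
  have hεm1 : εm ≤ 1/2 := min_le_right _ _
  have hεmε : εm ≤ ε := min_le_left _ _
  refine ⟨min (min (1/50) ((9/400) ^ N)) (min (εm/4) ((εm/(11 ^ N * N * 8)) ^ (N/(N-1)))),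
    ?_, 1/10, by norm_num, ?_⟩
  · have p1 : (0:ℝ) < (9/400) ^ N := Real.rpow_pos_of_pos (by norm_num) _
    have p2 : (0:ℝ) < 11 ^ N := Real.rpow_pos_of_pos (by norm_num) _
    have p3 : (0:ℝ) < (εm/(11 ^ N * N * 8)) ^ (N/(N-1)) :=
      Real.rpow_pos_of_pos (by positivity) _
    simp only [lt_min_iff]
    refine ⟨⟨by norm_num, p1⟩, by positivity, p3⟩
  intro D D' hDL hD'mem h hprob E hEL d hw0 hwbar hres
  obtain ⟨hD'0, hD'D⟩ := hD'mem
  obtain ⟨⟨hnn, hposd, hconc⟩, hmass⟩ := hprob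
  have hgconc : ConcaveOn ℝ (Set.Icc (0:ℝ) D') (Prop57.g N h) := hconc
  have hD0 : (0:ℝ) < D := lt_of_lt_of_le (by linarith) hDL
  set w : ℝ := ∫ x in E, h x with hwdef
  have hwb1 : w ≤ 1/50 := le_trans hwbar (le_trans (min_le_left _ _) (min_le_left _ _))
  have hwb2 : w ≤ (9/400) ^ N := le_trans hwbar (le_trans (min_le_left _ _) (min_le_right _ _))
  have hwb3 : w ≤ εm/4 := le_trans hwbar (le_trans (min_le_right _ _) (min_le_left _ _))
  have hwb4 : w ≤ (εm/(11 ^ N * N * 8)) ^ (N/(N-1)) :=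
    le_trans hwbar (le_trans (min_le_right _ _) (min_le_right _ _))
  have hint : IntegrableOn h (Set.Icc (0:ℝ) D') volume := by
    by_contra hcon
    rw [MeasureTheory.integral_undef hcon] at hmass
    norm_num at hmass
  set U : Set ℝ := ⋃ i, Set.Ioo (d.a i) (d.b i) with hUdef
  have hUsub : U ⊆ Set.Icc (0:ℝ) D' :=
    Set.iUnion_subset fun i x hx => ⟨(d.nonneg i).trans hx.1.le, hx.2.le.trans (d.le_top i)⟩
  have hintU : IntegrableOn h U volume := hint.mono_set hUsub
  have hwU : w = ∫ x in U, h x := setIntegral_congr_set d.aeEq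
  have hae_nonneg : 0 ≤ᵐ[volume.restrict (Set.Icc (0:ℝ) D')] h :=
    (ae_restrict_iff' measurableSet_Icc).mpr (Filter.Eventually.of_forall hnn)
  have hw1 : w ≤ 1 := by
    rw [hwU, ← hmass]
    exact setIntegral_mono_set hint hae_nonneg
      (HasSubset.Subset.eventuallyLE hUsub)
  have hwκpos : 0 < w ^ (1 - 1/N) := Real.rpow_pos_of_pos hw0 _
  have hwκ1 : w ^ (1 - 1/N) ≤ 1 := Real.rpow_le_one hw0.le hw1 hκ0.le
  have hres' : D * d.perim ≤ (11/10) * (N * w ^ (1 - 1/N)) := by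
    have hpos : 0 < N * w ^ (1 - 1/N) := by positivity
    have := hres
    rw [sub_le_iff_le_add] at this
    rw [div_le_iff₀ hpos] at this
    calc D * d.perim ≤ (1/10 + 1) * (N * w ^ (1 - 1/N)) := this
      _ = (11/10) * (N * w ^ (1 - 1/N)) := by ring
  -- endpoint values are dominated by the perimeter
  have hq0 : ∀ j, 0 ≤ (if d.a j < d.b j ∧ d.a j ≠ 0 then h (d.a j) else 0) +
      (if d.a j < d.b j ∧ d.b j ≠ D' then h (d.b j) else 0) := by
    intro j
    have h1 : 0 ≤ (if d.a j < d.b j ∧ d.a j ≠ 0 then h (d.a j) else 0) := by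
      split
      · exact hnn _ ⟨d.nonneg j, (d.le j).trans (d.le_top j)⟩
      · exact le_refl 0
    have h2 : 0 ≤ (if d.a j < d.b j ∧ d.b j ≠ D' then h (d.b j) else 0) := by
      split
      · exact hnn _ ⟨(d.nonneg j).trans (d.le j), d.le_top j⟩
      · exact le_refl 0
    linarith
  have hterm_le : ∀ i, (if d.a i < d.b i ∧ d.a i ≠ 0 then h (d.a i) else 0) +
      (if d.a i < d.b i ∧ d.b i ≠ D' then h (d.b i) else 0) ≤ d.perim :=
    fun i => Summable.le_tsum d.summablePerim i (fun j _ => hq0 j)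
  have hPa : ∀ i, d.a i < d.b i → d.a i ≠ 0 → h (d.a i) ≤ d.perim := by
    intro i hab hne
    have := hterm_le i
    rw [if_pos ⟨hab, hne⟩] at this
    have h2 : 0 ≤ (if d.a i < d.b i ∧ d.b i ≠ D' then h (d.b i) else 0) := by
      split
      · exact hnn _ ⟨(d.nonneg i).trans (d.le i), d.le_top i⟩
      · exact le_refl 0
    linarith
  have hPb : ∀ i, d.a i < d.b i → d.b i ≠ D' → h (d.b i) ≤ d.perim := by
    intro i hab hne
    have := hterm_le i
    rw [show (if d.a i < d.b i ∧ d.b i ≠ D' then h (d.b i) else 0) = h (d.b i) from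
      if_pos ⟨hab, hne⟩] at this
    have h2 : 0 ≤ (if d.a i < d.b i ∧ d.a i ≠ 0 then h (d.a i) else 0) := by
      split
      · exact hnn _ ⟨d.nonneg i, (d.le i).trans (d.le_top i)⟩
      · exact le_refl 0
    linarith
  have hdisj : Pairwise (Function.onFun Disjoint fun i => Set.Ioo (d.a i) (d.b i)) := by
    intro i j hij
    have : Disjoint (Set.Ioo (d.a i) (d.b i)) (Set.Ioo (d.a j) (d.b j)) := by
      rcases d.sep i j hij with hc | hc
      · rw [Set.disjoint_left]
        intro x hx hx'
        exact absurd (hx.2.trans_le (hc.trans hx'.1.le)) (lt_irrefl x)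
      · rw [Set.disjoint_left]
        intro x hx hx'
        exact absurd (hx'.2.trans_le (hc.trans hx.1.le)) (lt_irrefl x)
    exact this
  have hsum : HasSum (fun i => ∫ x in Set.Ioo (d.a i) (d.b i), h x) (∫ x in U, h x) :=
    hasSum_integral_iUnion (fun i => measurableSet_Ioo) hdisj hintU
  have hv0 : ∀ i, 0 ≤ ∫ x in Set.Ioo (d.a i) (d.b i), h x := fun i =>
    setIntegral_nonneg measurableSet_Ioo
      (fun x hx => hnn x ⟨(d.nonneg i).trans hx.1.le, hx.2.le.trans (d.le_top i)⟩)
  have hvle : ∀ i, (∫ x in Set.Ioo (d.a i) (d.b i), h x) ≤ w := by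
    intro i
    rw [hwU, ← hsum.tsum_eq]
    exact Summable.le_tsum hsum.summable i (fun j _ => hv0 j)
  -- Case II exclusion : D' cannot be shorter than 1.1 L
  have hD'L : (11/10) * L ≤ D' := by
    by_contra hcon
    push_neg at hcon
    have hPge := perim_lower_bound hN hD'0 hnn hgconc hint hmass d
      (fun i => (hvle i).trans hwb2) (fun i => (hvle i).trans hwb1)
    rw [← hUdef, ← hwU] at hPge
    have hDP : D * ((9/20) * N * w ^ (1 - 1/N) / D') ≤ D * d.perim :=
      mul_le_mul_of_nonneg_left hPge hD0.le
    have hcross : (11/10) * (N * w ^ (1 - 1/N)) < D * ((9/20) * N * w ^ (1 - 1/N) / D') := by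
      have hNw : (0:ℝ) < N * w ^ (1 - 1/N) := by positivity
      have h1 : (11/10) * D' < (9/20) * D := by linarith
      rw [show D * ((9/20) * N * w ^ (1 - 1/N) / D') =
        D * ((9/20) * N * w ^ (1 - 1/N)) / D' from by ring, lt_div_iff₀ hD'0]
      calc (11/10) * (N * w ^ (1 - 1/N)) * D' = ((11/10) * D') * (N * w ^ (1 - 1/N)) := by ring
        _ < ((9/20) * D) * (N * w ^ (1 - 1/N)) := mul_lt_mul_of_pos_right h1 hNw
        _ = D * ((9/20) * N * w ^ (1 - 1/N)) := by ring
    linarith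
  -- essential supremum facts
  set S : Set ℝ := {t : ℝ | volume (E ∩ Set.Ioi t) = 0} with hSdef
  set bE : ℝ := essSupSet E with hbEdef
  have hbE_inf : bE = sInf S := rfl
  have hSL : L ∈ S := by
    have : E ∩ Set.Ioi L = ∅ := by
      ext x
      simp only [Set.mem_inter_iff, Set.mem_Ioi, Set.mem_empty_iff_false, iff_false, not_and]
      intro hx
      exact not_lt.mpr (hEL hx).2
    simp [hSdef, this]
  have hvolE : volume E ≠ 0 := by
    intro hcon
    have : w = 0 := by
      rw [hwdef, Measure.restrict_eq_zero.mpr hcon, integral_zero_measure]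
    linarith
  have hSnonneg : ∀ s ∈ S, (0:ℝ) ≤ s := by
    intro s hs
    by_contra hcon
    push_neg at hcon
    have hEs : E ∩ Set.Ioi s = E := by
      apply Set.inter_eq_self_of_subset_left
      intro x hx
      exact lt_of_lt_of_le hcon (hEL hx).1
    rw [Set.mem_setOf_eq, hEs] at hs
    exact hvolE hs
  have hSne : S.Nonempty := ⟨L, hSL⟩
  have hSbdd : BddBelow S := ⟨0, hSnonneg⟩
  have hb0 : 0 ≤ bE := le_csInf hSne hSnonneg
  have hbL : bE ≤ L := csInf_le hSbdd hSL
  have hSD' : D' ∈ S := by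
    have h1 : volume (E ∩ Set.Ioi D') = volume (U ∩ Set.Ioi D') :=
      measure_congr (ae_eq_set_inter d.aeEq (Filter.EventuallyEq.refl _ _))
    have h2 : U ∩ Set.Ioi D' = ∅ := by
      ext x
      simp only [Set.mem_inter_iff, Set.mem_Ioi, Set.mem_empty_iff_false, iff_false, not_and]
      intro hx
      obtain ⟨_, ⟨i, rfl⟩, hxi⟩ := hx
      exact not_lt.mpr (hxi.2.le.trans (d.le_top i))
    rw [Set.mem_setOf_eq, h1, h2]
    simp
  have hbD' : bE ≤ D' := csInf_le hSbdd hSD'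
  have hupward : ∀ t, bE < t → t ∈ S := by
    intro t ht
    obtain ⟨s, hsS, hst⟩ := (csInf_lt_iff hSbdd hSne).mp ht
    exact measure_mono_null (Set.inter_subset_inter_right E (Set.Ioi_subset_Ioi hst.le)) hsS
  have htopnull : volume (E ∩ Set.Ioi bE) = 0 := by
    have hcover : E ∩ Set.Ioi bE ⊆ ⋃ n : ℕ, E ∩ Set.Ioi (bE + 1/(n+1)) := by
      intro x hx
      obtain ⟨n, hn⟩ := exists_nat_one_div_lt (show (0:ℝ) < x - bE by
        have := hx.2; simp only [Set.mem_Ioi] at this; linarith)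
      refine Set.mem_iUnion.mpr ⟨n, hx.1, ?_⟩
      simp only [Set.mem_Ioi]
      have : (1:ℝ)/(n+1) < x - bE := hn
      linarith
    refine measure_mono_null hcover (measure_iUnion_null fun n => hupward _ ?_)
    have : (0:ℝ) < 1/((n:ℝ)+1) := by positivity
    linarith
  have hblow : ∀ τ, τ < bE → volume (E ∩ Set.Ioi τ) ≠ 0 := by
    intro τ hτ hcon
    exact absurd (csInf_le hSbdd hcon) (not_le.mpr hτ)
  have hbi_le : ∀ i, d.a i < d.b i → d.b i ≤ bE := by
    intro i hab
    by_contra hcon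
    push_neg at hcon
    have h1 : Set.Ioo (max (d.a i) bE) (d.b i) ⊆ U ∩ Set.Ioi bE := by
      intro x hx
      refine ⟨Set.mem_iUnion.mpr ⟨i, (le_max_left _ _).trans_lt hx.1, hx.2⟩, ?_⟩
      exact (le_max_right _ _).trans_lt hx.1
    have h2 : volume (U ∩ Set.Ioi bE) = 0 := by
      exact (measure_congr (ae_eq_set_inter d.aeEq (Filter.EventuallyEq.refl _ _))).symm.trans htopnull
    have h3 : volume (Set.Ioo (max (d.a i) bE) (d.b i)) = 0 :=
      measure_mono_null h1 h2
    rw [Real.volume_Ioo] at h3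
    have h4 : max (d.a i) bE < d.b i := max_lt hab hcon
    simp only [ENNReal.ofReal_eq_zero] at h3
    linarith [h3, h4]
  clear hres hwbar
  -- trivial case bE = 0
  rcases eq_or_lt_of_le hb0 with hbzero | hbpos
  · intro x hx
    have hx0 : x = 0 := le_antisymm (hx.2.trans hbzero.ge) hx.1
    subst hx0
    rw [Real.zero_rpow hN1, mul_zero, zero_mul]
    exact hnn 0 ⟨le_refl _, hD'0.le⟩
  -- main case : bE > 0
  have hbD : bE ≤ D := hbD'.trans hD'D
  have hkey : ∃ y, bE ≤ y ∧ y ≤ D' ∧ (1 - εm) * ((N/D^N) * y^(N-1)) ≤ h y := by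
    by_contra hcf
    push_neg at hcf
    -- counterfactual : mass below bE is at least εm
    have hDN0 : (0:ℝ) < D ^ N := Real.rpow_pos_of_pos hD0 _
    have hC1 : (∫ x in Set.Icc bE D', h x) ≤ 1 - εm := by
      have hcont : Continuous (fun y : ℝ => (1 - εm) * ((N/D^N) * y^(N-1))) := by
        apply Continuous.mul continuous_const
        apply Continuous.mul continuous_const
        exact continuous_id.rpow_const (fun x => Or.inr (by linarith))
      have hmono : (∫ x in Set.Icc bE D', h x) ≤
          ∫ x in Set.Icc bE D', (1 - εm) * ((N/D^N) * x^(N-1)) := by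
        apply setIntegral_mono_on
        · exact hint.mono_set (fun x hx => ⟨hb0.trans hx.1, hx.2⟩)
        · exact hcont.integrableOn_Icc
        · exact measurableSet_Icc
        · exact fun x hxI => (hcf x hxI.1 hxI.2).le
      have hval : ∫ x in Set.Icc bE D', (1 - εm) * ((N/D^N) * x^(N-1)) =
          (1 - εm) * ((N/D^N) * ((D'^N - bE^N)/N)) := by
        rw [integral_Icc_eq_integral_Ioo, ← integral_Ioc_eq_integral_Ioo,
          ← intervalIntegral.integral_of_le hbD']
        rw [intervalIntegral.integral_const_mul, intervalIntegral.integral_const_mul]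
        rw [integral_rpow (Or.inl (by linarith : (-1:ℝ) < N - 1))]
        rw [(by ring : N - 1 + 1 = N)]
      have hend : (1 - εm) * ((N/D^N) * ((D'^N - bE^N)/N)) ≤ 1 - εm := by
        have h1 : D'^N ≤ D^N := Real.rpow_le_rpow hD'0.le hD'D hN0.le
        have h2 : (0:ℝ) ≤ bE^N := Real.rpow_nonneg hb0 _
        have h3 : (N/D^N) * ((D'^N - bE^N)/N) ≤ 1 := by
          rw [div_mul_div_comm, div_le_one (by positivity)]
          calc N * (D'^N - bE^N) ≤ N * D^N :=
              mul_le_mul_of_nonneg_left (by linarith) hN0.le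
            _ = D ^ N * N := by ring
        have h4 : (0:ℝ) ≤ 1 - εm := by linarith
        calc (1 - εm) * ((N/D^N) * ((D'^N - bE^N)/N)) ≤ (1 - εm) * 1 :=
            mul_le_mul_of_nonneg_left h3 h4
          _ = 1 - εm := mul_one _
      calc (∫ x in Set.Icc bE D', h x) ≤ _ := hmono
        _ = _ := hval
        _ ≤ 1 - εm := hend
    have hC2 : εm ≤ ∫ x in Set.Ioo 0 bE, h x := by
      have hu : Set.Ico (0:ℝ) bE ∪ Set.Icc bE D' = Set.Icc 0 D' :=
        Set.Ico_union_Icc_eq_Icc hb0 hbD'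
      have hd : Disjoint (Set.Ico (0:ℝ) bE) (Set.Icc bE D') := by
        rw [Set.disjoint_left]
        intro x hx hx'
        exact absurd hx'.1 (not_le.mpr hx.2)
      have hi1 : IntegrableOn h (Set.Ico (0:ℝ) bE) volume :=
        hint.mono_set (fun x hx => ⟨hx.1, hx.2.le.trans hbD'⟩)
      have hi2 : IntegrableOn h (Set.Icc bE D') volume :=
        hint.mono_set (fun x hx => ⟨hb0.trans hx.1, hx.2⟩)
      have hsplit : (1:ℝ) = (∫ x in Set.Ico 0 bE, h x) + ∫ x in Set.Icc bE D', h x := by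
        rw [← hmass, ← hu, setIntegral_union hd measurableSet_Icc hi1 hi2]
      rw [integral_Ico_eq_integral_Ioo] at hsplit
      linarith
    -- select the top interval
    set ρ : ℝ := min (bE/2) (εm*D/((2:ℝ)^(N-1)*N*5)) with hρdef
    have h2N : (0:ℝ) < (2:ℝ)^(N-1) := Real.rpow_pos_of_pos (by norm_num) _
    have hρ0 : 0 < ρ := lt_min (by linarith) (by positivity)
    have hρb2 : ρ ≤ bE/2 := min_le_left _ _
    have hρe : ρ ≤ εm*D/((2:ℝ)^(N-1)*N*5) := min_le_right _ _
    set τ : ℝ := bE - ρ with hτdef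
    have hτb : τ < bE := by rw [hτdef]; linarith
    have hEU : volume (U ∩ Set.Ioi τ) ≠ 0 := by
      exact fun h0 => hblow τ hτb
        ((measure_congr (ae_eq_set_inter d.aeEq (Filter.EventuallyEq.refl _ _))).trans h0)
    have hiex : ∃ i, volume (Set.Ioo (d.a i) (d.b i) ∩ Set.Ioi τ) ≠ 0 := by
      by_contra hcon
      push_neg at hcon
      apply hEU
      have : U ∩ Set.Ioi τ = ⋃ i, (Set.Ioo (d.a i) (d.b i) ∩ Set.Ioi τ) := by
        rw [hUdef, Set.iUnion_inter]
      rw [this]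
      exact measure_iUnion_null hcon
    obtain ⟨i, hi⟩ := hiex
    have hinter : Set.Ioo (d.a i) (d.b i) ∩ Set.Ioi τ = Set.Ioo (max (d.a i) τ) (d.b i) := by
      ext x
      simp only [Set.mem_inter_iff, Set.mem_Ioo, Set.mem_Ioi, max_lt_iff]
      tauto
    rw [hinter, Real.volume_Ioo] at hi
    have hab : max (d.a i) τ < d.b i := by
      by_contra hcon
      push_neg at hcon
      exact hi (ENNReal.ofReal_eq_zero.mpr (by linarith))
    have habi : d.a i < d.b i := (le_max_left _ τ).trans_lt hab
    have hβτ : τ < d.b i := (le_max_right (d.a i) _).trans_lt hab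
    have hβbE : d.b i ≤ bE := hbi_le i habi
    have hτ0 : 0 < τ := by rw [hτdef]; linarith
    have hβpos : 0 < d.b i := hτ0.trans hβτ
    have hβD' : d.b i ≤ D' := d.le_top i
    have haD' : d.a i < D' := habi.trans_le hβD'
    have haL : d.a i ≤ L := ((habi.le.trans hβbE).trans hbL)
    have ha0 : 0 ≤ d.a i := d.nonneg i
    have h2bE : bE < 2 * d.b i := by
      have : bE - ρ < d.b i := hβτ
      have : bE/2 < d.b i := by linarith [hρb2]
      linarith
    -- nonnegativity a.e. on U
    have haeU : 0 ≤ᵐ[volume.restrict U] h := by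
      apply (ae_restrict_iff' (MeasurableSet.iUnion fun i => measurableSet_Ioo)).mpr
      exact Filter.Eventually.of_forall (fun x hx => hnn x (hUsub hx))
    -- piece 2 : the interval itself
    have hpiece2 : (∫ x in Set.Icc (d.a i) (d.b i), h x) ≤ εm/4 := by
      have e1 : (∫ x in Set.Icc (d.a i) (d.b i), h x) = ∫ x in Set.Ioo (d.a i) (d.b i), h x :=
        integral_Icc_eq_integral_Ioo
      have e2 : (∫ x in Set.Ioo (d.a i) (d.b i), h x) ≤ ∫ x in U, h x := by
        apply setIntegral_mono_set hintU haeU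
        exact HasSubset.Subset.eventuallyLE (Set.subset_iUnion (fun j => Set.Ioo (d.a j) (d.b j)) i)
      rw [e1]
      rw [hwU] at hwb3
      linarith
    -- piece 3 : the strip (d.b i, bE)
    have hpiece3 : (∫ x in Set.Ioo (d.b i) bE, h x) ≤ εm/4 := by
      by_cases hβD'eq : d.b i = D'
      · have : Set.Ioo (d.b i) bE = ∅ :=
          Set.Ioo_eq_empty (by rw [hβD'eq]; exact not_lt.mpr hbD')
        rw [this]
        simp
        positivity
      · have hhβ : h (d.b i) ≤ d.perim := hPb i habi hβD'eq
        have hhβ0 : 0 ≤ h (d.b i) := hnn _ ⟨hβpos.le, hβD'⟩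
        have hhβ2 : h (d.b i) * D ≤ (11/10) * (N * w ^ (1 - 1/N)) := by
          calc h (d.b i) * D ≤ d.perim * D := mul_le_mul_of_nonneg_right hhβ hD0.le
            _ = D * d.perim := by ring
            _ ≤ _ := hres'
        have hptw : ∀ y ∈ Set.Ioo (d.b i) bE, h y ≤ (2:ℝ)^(N-1) * h (d.b i) := by
          intro y hy
          have hy0 : 0 < y := hβpos.trans hy.1
          have hyD' : y ≤ D' := hy.2.le.trans hbD'
          have hF := F1 hN hgconc hnn hβpos.le hy.1.le hy0 hyD'
          have hhy0 : 0 ≤ h y := hnn y ⟨hy0.le, hyD'⟩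
          have hby : (1:ℝ)/2 ≤ d.b i / y := by
            rw [le_div_iff₀ hy0]
            have : y < 2 * d.b i := hy.2.trans h2bE
            linarith
          have hA : ((1:ℝ)/2)^(N-1) ≤ (d.b i / y)^(N-1) :=
            Real.rpow_le_rpow (by norm_num) hby (by linarith)
          have hhalf : ((1:ℝ)/2)^(N-1) = 1/((2:ℝ)^(N-1)) := by
            rw [Real.div_rpow (by norm_num) (by norm_num), Real.one_rpow]
          have hkey2 : ((1:ℝ)/2)^(N-1) * h y ≤ h (d.b i) := by
            calc ((1:ℝ)/2)^(N-1) * h y ≤ (d.b i / y)^(N-1) * h y :=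
                  mul_le_mul_of_nonneg_right hA hhy0
              _ ≤ h (d.b i) := hF
          rw [hhalf] at hkey2
          rw [div_mul_eq_mul_div, div_le_iff₀ h2N] at hkey2
          linarith [hkey2]
        have hbnd : (∫ x in Set.Ioo (d.b i) bE, h x) ≤
            (bE - d.b i) * ((2:ℝ)^(N-1) * h (d.b i)) := by
          have := setIntegral_mono_on
            (hint.mono_set (fun x hx => ⟨hβpos.le.trans hx.1.le, hx.2.le.trans hbD'⟩))
            (integrableOn_const measure_Ioo_lt_top.ne)
            measurableSet_Ioo hptw
          rw [setIntegral_const, Real.volume_real_Ioo_of_le (by linarith [hβbE] : d.b i ≤ bE),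
            smul_eq_mul] at this
          exact this
        have hstrip : bE - d.b i ≤ ρ := by
          have : τ < d.b i := hβτ
          rw [hτdef] at this
          linarith
        have hc1 : (bE - d.b i) * ((2:ℝ)^(N-1) * h (d.b i)) ≤
            ρ * ((2:ℝ)^(N-1) * h (d.b i)) := by
          apply mul_le_mul_of_nonneg_right hstrip
          positivity
        have hc2 : ρ * ((2:ℝ)^(N-1) * h (d.b i)) ≤ εm/4 := by
          have hD60 : h (d.b i) ≤ (11/10) * N / D := by
            rw [le_div_iff₀ hD0]
            have h1 : N * w ^ (1 - 1/N) ≤ N * 1 := mul_le_mul_of_nonneg_left hwκ1 hN0.le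
            calc h (d.b i) * D ≤ (11/10) * (N * w ^ (1 - 1/N)) := hhβ2
              _ ≤ (11/10) * N := by linarith

          calc ρ * ((2:ℝ)^(N-1) * h (d.b i)) ≤
                (εm*D/((2:ℝ)^(N-1)*N*5)) * ((2:ℝ)^(N-1) * ((11/10) * N / D)) := by
                apply mul_le_mul hρe _ (by positivity) (by positivity)
                apply mul_le_mul_of_nonneg_left hD60 (by positivity)
            _ = εm * (11/50) := by field_simp; ring
            _ ≤ εm/4 := by linarith [hεm0]
        linarith
    -- piece 1 : below the left endpoint
    have hpiece1 : (∫ x in Set.Ioo 0 (d.a i), h x) ≤ εm/4 := by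
      rcases eq_or_lt_of_le ha0 with ha00 | ha0'
      · rw [← ha00]
        rw [Set.Ioo_self]
        simp
        positivity
      · have hha : h (d.a i) ≤ d.perim := hPa i habi (ne_of_gt ha0')
        have hha0 : 0 ≤ h (d.a i) := hnn _ ⟨ha0, haD'.le⟩
        have hha2 : h (d.a i) * D ≤ (11/10) * (N * w ^ (1 - 1/N)) := by
          calc h (d.a i) * D ≤ d.perim * D := mul_le_mul_of_nonneg_right hha hD0.le
            _ = D * d.perim := by ring
            _ ≤ _ := hres'
        have hDa11 : D' ≤ 11 * (D' - d.a i) := by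
          have : 11 * d.a i ≤ 11 * L := by linarith
          linarith [hD'L]
        have hDa0 : 0 < D' - d.a i := by linarith [haD']
        have h11N : (0:ℝ) < (11:ℝ)^(N-1) := Real.rpow_pos_of_pos (by norm_num) _
        have hptw : ∀ y ∈ Set.Ioo (0:ℝ) (d.a i), h y ≤ (11:ℝ)^(N-1) * h (d.a i) := by
          intro y hy
          have hF2 := F2 hN hgconc hnn hy.1.le hy.2.le haD'
          have hratio : (D' - y)/(D' - d.a i) ≤ 11 := by
            rw [div_le_iff₀ hDa0]
            have : 0 < y := hy.1
            linarith [hDa11]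
          have : ((D' - y)/(D' - d.a i))^(N-1) ≤ (11:ℝ)^(N-1) :=
            Real.rpow_le_rpow (by
              apply div_nonneg _ hDa0.le
              have : y < D' := hy.2.trans haD'
              linarith) hratio (by linarith)
          calc h y ≤ ((D' - y)/(D' - d.a i))^(N-1) * h (d.a i) := hF2
            _ ≤ (11:ℝ)^(N-1) * h (d.a i) := mul_le_mul_of_nonneg_right this hha0
        have hbnd : (∫ x in Set.Ioo 0 (d.a i), h x) ≤ d.a i * ((11:ℝ)^(N-1) * h (d.a i)) := by
          have := setIntegral_mono_on
            (hint.mono_set (fun x hx => ⟨hx.1.le, hx.2.le.trans haD'.le⟩))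
            (integrableOn_const measure_Ioo_lt_top.ne)
            measurableSet_Ioo hptw
          rw [setIntegral_const, Real.volume_real_Ioo_of_le (by linarith : (0:ℝ) ≤ d.a i),
            smul_eq_mul] at this
          calc (∫ x in Set.Ioo 0 (d.a i), h x) ≤ (d.a i - 0) * ((11:ℝ)^(N-1) * h (d.a i)) := this
            _ = d.a i * ((11:ℝ)^(N-1) * h (d.a i)) := by ring
        have hw4κ : w ^ (1 - 1/N) ≤ εm/(11 ^ N * N * 8) := by
          have hX0 : (0:ℝ) ≤ εm/(11 ^ N * N * 8) := by
            have : (0:ℝ) < (11:ℝ)^N := Real.rpow_pos_of_pos (by norm_num) _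
            positivity
          have h1 : w ^ (1 - 1/N) ≤ ((εm/(11 ^ N * N * 8)) ^ (N/(N-1))) ^ (1 - 1/N) :=
            Real.rpow_le_rpow hw0.le hwb4 hκ0.le
          rwa [← Real.rpow_mul hX0,
            (by rw [hκe]; field_simp : N/(N-1) * (1 - 1/N) = 1), Real.rpow_one] at h1
        have h11e : (11:ℝ)^(N-1) * 11 = (11:ℝ)^N := by
          rw [← Real.rpow_add_one (by norm_num : (11:ℝ) ≠ 0)]
          congr 1
          ring
        have h11Npos : (0:ℝ) < (11:ℝ)^N := Real.rpow_pos_of_pos (by norm_num) _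
        have hhaD : h (d.a i) ≤ (11/10) * (N * w ^ (1 - 1/N)) / D := by
          rw [le_div_iff₀ hD0]
          linarith [hha2]
        calc (∫ x in Set.Ioo 0 (d.a i), h x) ≤ d.a i * ((11:ℝ)^(N-1) * h (d.a i)) := hbnd
          _ ≤ L * ((11:ℝ)^(N-1) * ((11/10) * (N * w ^ (1 - 1/N)) / D)) := by
              apply mul_le_mul haL _ (by positivity) hL.le
              apply mul_le_mul_of_nonneg_left hhaD (by positivity)
          _ = ((11:ℝ)^(N-1) * 11) * (N * w ^ (1 - 1/N)) * (L / D) / 10 := by ring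
          _ ≤ ((11:ℝ)^(N-1) * 11) * (N * w ^ (1 - 1/N)) * (1 / 3) / 10 := by
              apply div_le_div_of_nonneg_right _ (by norm_num)
              apply mul_le_mul_of_nonneg_left _ (by positivity)
              rw [div_le_div_iff₀ hD0 (by norm_num)]
              linarith
          _ = (11:ℝ)^N * N * (w ^ (1 - 1/N)) / 30 := by rw [h11e]; ring
          _ ≤ (11:ℝ)^N * N * (εm/(11 ^ N * N * 8)) / 30 := by
              apply div_le_div_of_nonneg_right _ (by norm_num)
              apply mul_le_mul_of_nonneg_left hw4κ (by positivity)
          _ = εm / 240 := by field_simp; ring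
          _ ≤ εm/4 := by linarith [hεm0]
    -- splitting
    have hsub3 : Set.Ioo 0 bE ⊆
        (Set.Ioo 0 (d.a i) ∪ Set.Icc (d.a i) (d.b i)) ∪ Set.Ioo (d.b i) bE := by
      intro x hx
      by_cases h1 : x < d.a i
      · exact Or.inl (Or.inl ⟨hx.1, h1⟩)
      by_cases h2 : x ≤ d.b i
      · exact Or.inl (Or.inr ⟨not_lt.mp h1, h2⟩)
      · exact Or.inr ⟨not_le.mp h2, hx.2⟩
    have hWsub : (Set.Ioo 0 (d.a i) ∪ Set.Icc (d.a i) (d.b i)) ∪ Set.Ioo (d.b i) bE ⊆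
        Set.Icc (0:ℝ) D' := by
      intro x hx
      rcases hx with (hx | hx) | hx
      · exact ⟨hx.1.le, hx.2.le.trans haD'.le⟩
      · exact ⟨ha0.trans hx.1, hx.2.trans hβD'⟩
      · exact ⟨(hβpos.trans hx.1).le, hx.2.le.trans hbD'⟩
    have hintW : IntegrableOn h
        ((Set.Ioo 0 (d.a i) ∪ Set.Icc (d.a i) (d.b i)) ∪ Set.Ioo (d.b i) bE) volume :=
      hint.mono_set hWsub
    have hmeasW : MeasurableSet
        ((Set.Ioo 0 (d.a i) ∪ Set.Icc (d.a i) (d.b i)) ∪ Set.Ioo (d.b i) bE) :=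
      ((measurableSet_Ioo.union measurableSet_Icc).union measurableSet_Ioo)
    have hsplit_le : (∫ x in Set.Ioo 0 bE, h x) ≤
        (∫ x in Set.Ioo 0 (d.a i), h x) + (∫ x in Set.Icc (d.a i) (d.b i), h x) +
        (∫ x in Set.Ioo (d.b i) bE, h x) := by
      have hstep : (∫ x in Set.Ioo 0 bE, h x) ≤
          ∫ x in (Set.Ioo 0 (d.a i) ∪ Set.Icc (d.a i) (d.b i)) ∪ Set.Ioo (d.b i) bE, h x := by
        apply setIntegral_mono_set hintW
        · exact (ae_restrict_iff' hmeasW).mpr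
            (Filter.Eventually.of_forall (fun x hx => hnn x (hWsub hx)))
        · exact HasSubset.Subset.eventuallyLE hsub3
      have hd1 : Disjoint (Set.Ioo (0:ℝ) (d.a i)) (Set.Icc (d.a i) (d.b i)) := by
        rw [Set.disjoint_left]
        intro x hx hx'
        exact absurd hx'.1 (not_le.mpr hx.2)
      have hd2 : Disjoint (Set.Ioo (0:ℝ) (d.a i) ∪ Set.Icc (d.a i) (d.b i))
          (Set.Ioo (d.b i) bE) := by
        rw [Set.disjoint_left]
        intro x hx hx'
        rcases hx with hx | hx
        · exact absurd (hx.2.trans_le ((d.le i).trans hx'.1.le)) (lt_irrefl x)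
        · exact absurd (hx.2.trans_lt hx'.1) (lt_irrefl x)
      rw [setIntegral_union hd2 measurableSet_Ioo
          (hintW.mono_set Set.subset_union_left)
          (hintW.mono_set Set.subset_union_right),
        setIntegral_union hd1 measurableSet_Icc
          ((hintW.mono_set Set.subset_union_left).mono_set Set.subset_union_left)
          ((hintW.mono_set Set.subset_union_left).mono_set Set.subset_union_right)] at hstep
      exact hstep
    linarith [hC2, hpiece1, hpiece2, hpiece3, hsplit_le, hεm0]
  -- conclude from the existence of a good point y
  obtain ⟨y, hy1, hy2, hy3⟩ := hkey
  have hy0 : 0 < y := lt_of_lt_of_le hbpos hy1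
  intro x hx
  have hxD' : x ≤ D' := hx.2.trans hbD'
  rcases eq_or_lt_of_le hx.1 with hx0 | hx0
  · rw [← hx0, Real.zero_rpow hN1, mul_zero, zero_mul]
    exact hnn 0 ⟨le_refl _, hD'0.le⟩
  · have hxy : x ≤ y := hx.2.trans hy1
    have hF := F1 hN hgconc hnn hx.1 hxy hy0 hy2
    have hpow : (x/y)^(N-1) * y^(N-1) = x^(N-1) := by
      rw [← Real.mul_rpow (div_nonneg hx.1 hy0.le) hy0.le, div_mul_cancel₀ _ hy0.ne']
    have hxN : 0 ≤ (N / D ^ N) * x ^ (N-1) := by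
      have h1 : (0:ℝ) < D ^ N := Real.rpow_pos_of_pos hD0 _
      have h2 : (0:ℝ) ≤ x ^ (N-1) := Real.rpow_nonneg hx.1 _
      positivity
    by_cases hεneg : 1 - ε ≤ 0
    · calc (N / D ^ N) * x ^ (N - 1) * (1 - ε) ≤ 0 :=
            mul_nonpos_of_nonneg_of_nonpos hxN hεneg
        _ ≤ h x := hnn x ⟨hx.1, hxD'⟩
    · push_neg at hεneg
      calc (N / D ^ N) * x ^ (N - 1) * (1 - ε)
          ≤ (N / D ^ N) * x ^ (N - 1) * (1 - εm) :=
            mul_le_mul_of_nonneg_left (by linarith) hxN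
        _ = (x/y)^(N-1) * ((1 - εm) * ((N/D^N) * y^(N-1))) := by
            rw [← hpow]; ring
        _ ≤ (x/y)^(N-1) * h y :=
            mul_le_mul_of_nonneg_left hy3 (Real.rpow_nonneg (div_nonneg hx.1 hy0.le) _)
        _ ≤ h x := hF
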